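/- For t > 0 define g₁(t) = (1-i)/√(2πt) - (1/π) ∫_{-∞}^∞ e^{-is²t}/(1+s²) ds (the integral converging absolutely). Then g₁(t) = O(t^{-1/2}) as t → 0⁺ and g₁(t) = O(t^{-3/2}) as t → ∞; that is, there exist constants C₀, δ > 0 with |g₁(t)| ≤ C₀ t^{-1/2} for 0 < t < δ, and constants C₁, R > 0 with |g₁(t)| ≤ C₁ t^{-3/2} for t > R. -/

import Mathlib

open Complex MeasureTheory Set

/-- The Neumann boundary value `g₁(t) = qₓ(0,t)` of the linear Schrödinger solution on the
half-line with initial datum `e^{-x}` and homogeneous Dirichlet boundary condition: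
`g₁(t) = (1-i)/√(2πt) - (1/π) ∫_{-∞}^∞ e^{-is²t}/(1+s²) ds`. -/
noncomputable def neumannLS (t : ℝ) : ℂ :=
  (1 - Complex.I) / (Real.sqrt (2 * Real.pi * t) : ℂ)
    - (1 / (Real.pi : ℂ))
      * ∫ s : ℝ, Complex.exp (-Complex.I * (s : ℂ) ^ 2 * (t : ℂ)) / (1 + (s : ℂ) ^ 2)

namespace NeumannLSAux

noncomputable def W (t y : ℝ) : ℂ :=
  ((Real.pi : ℂ) / ((y : ℂ) + Complex.I * t)) ^ (1 / 2 : ℂ)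

noncomputable def c0 (t : ℝ) : ℂ := (1 - Complex.I) / (Real.sqrt (2 * Real.pi * t) : ℂ)

lemma z_ne_zero {t : ℝ} (ht : 0 < t) (y : ℝ) : ((y : ℂ) + Complex.I * t) ≠ 0 := by
  intro h
  have him : ((y : ℂ) + Complex.I * t).im = t := by simp
  rw [h] at him
  simp at him
  exact ht.ne' him.symm

lemma w_ne_zero {t : ℝ} (ht : 0 < t) (y : ℝ) :
    ((Real.pi : ℂ) / ((y : ℂ) + Complex.I * t)) ≠ 0 :=
  div_ne_zero (by exact_mod_cast Real.pi_ne_zero) (z_ne_zero ht y)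

lemma W_sq {t : ℝ} (ht : 0 < t) (y : ℝ) :
    W t y ^ 2 = (Real.pi : ℂ) / ((y : ℂ) + Complex.I * t) := by
  rw [W, sq, ← Complex.cpow_add _ _ (w_ne_zero ht y)]
  norm_num

lemma W_re_nonneg {t : ℝ} (ht : 0 < t) (y : ℝ) : 0 ≤ (W t y).re := by
  rw [W, Complex.cpow_def_of_ne_zero (w_ne_zero ht y), Complex.exp_re]
  have him : (Complex.log ((Real.pi : ℂ) / ((y : ℂ) + Complex.I * t)) * (1 / 2 : ℂ)).im
      = ((Real.pi : ℂ) / ((y : ℂ) + Complex.I * t)).arg / 2 := by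
    rw [show (1 / 2 : ℂ) = ((1 / 2 : ℝ) : ℂ) by norm_num, mul_comm]
    simp [Complex.mul_im, Complex.log_im]
    ring
  rw [him]
  have h1 := Complex.neg_pi_lt_arg ((Real.pi : ℂ) / ((y : ℂ) + Complex.I * t))
  have h2 := Complex.arg_le_pi ((Real.pi : ℂ) / ((y : ℂ) + Complex.I * t))
  have hcos : 0 ≤ Real.cos (((Real.pi : ℂ) / ((y : ℂ) + Complex.I * t)).arg / 2) :=
    Real.cos_nonneg_of_mem_Icc ⟨by linarith, by linarith⟩
  positivity

lemma abs_z_ge {t : ℝ} (ht : 0 < t) (y : ℝ) : t ≤ ‖(y : ℂ) + Complex.I * t‖ := by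
  have := Complex.abs_im_le_norm ((y : ℂ) + Complex.I * t)
  have him : ((y : ℂ) + Complex.I * t).im = t := by simp
  rw [him, abs_of_pos ht] at this
  exact this

lemma W_norm_le {t : ℝ} (ht : 0 < t) (y : ℝ) : ‖W t y‖ ≤ Real.sqrt (Real.pi / t) := by
  rw [W, show (1 / 2 : ℂ) = ((1 / 2 : ℝ) : ℂ) by norm_num,
    Complex.norm_cpow_real]
  rw [norm_div, Complex.norm_real, Real.norm_eq_abs, abs_of_pos Real.pi_pos]
  rw [Real.sqrt_eq_rpow]
  apply Real.rpow_le_rpow (by positivity) _ (by norm_num)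
  apply div_le_div_of_nonneg_left Real.pi_pos.le ht (abs_z_ge ht y)

lemma key_sub {a b : ℂ} (ha : 0 ≤ a.re) (hb : 0 < b.re) :
    ‖a - b‖ ≤ ‖a ^ 2 - b ^ 2‖ / b.re := by
  have hab : (0 : ℝ) < (a + b).re := by
    rw [Complex.add_re]; linarith
  have hne : a + b ≠ 0 := by
    intro h; rw [h] at hab; simp at hab
  have h1 : a ^ 2 - b ^ 2 = (a + b) * (a - b) := by ring
  rw [h1, norm_mul]
  have h2 : b.re ≤ ‖a + b‖ := by
    have := Complex.re_le_norm (a + b)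
    rw [Complex.add_re] at this
    linarith
  calc ‖a - b‖ = ‖a + b‖ * ‖a - b‖ / ‖a + b‖ :=
        (mul_div_cancel_left₀ _ (norm_ne_zero_iff.mpr hne)).symm
    _ ≤ ‖a + b‖ * ‖a - b‖ / b.re := by
        apply div_le_div_of_nonneg_left (by positivity) hb h2

lemma sqrt2pit_pos {t : ℝ} (ht : 0 < t) : 0 < Real.sqrt (2 * Real.pi * t) :=
  Real.sqrt_pos.mpr (by positivity)

lemma c0_eq (t : ℝ) :
    c0 t = (((Real.sqrt (2 * Real.pi * t))⁻¹ : ℝ) : ℂ) * (1 - Complex.I) := by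
  rw [c0]; push_cast; rw [div_eq_inv_mul]

lemma c0_re (t : ℝ) : (c0 t).re = (Real.sqrt (2 * Real.pi * t))⁻¹ := by
  rw [c0_eq]
  simp

lemma c0_norm (t : ℝ) : ‖c0 t‖ = Real.sqrt 2 * (Real.sqrt (2 * Real.pi * t))⁻¹ := by
  rw [c0_eq, norm_mul]
  have h1 : ‖1 - Complex.I‖ = Real.sqrt 2 := by
    rw [Complex.norm_def, Complex.normSq_apply]
    norm_num
  rw [h1, Complex.norm_real, Real.norm_eq_abs, _root_.abs_of_nonneg (by positivity)]
  ring

lemma c0_sq {t : ℝ} (ht : 0 < t) : c0 t ^ 2 = -Complex.I / ((Real.pi : ℂ) * t) := by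
  have hr2 : Real.sqrt (2 * Real.pi * t) ^ 2 = 2 * Real.pi * t :=
    Real.sq_sqrt (by positivity)
  have h1 : (1 - Complex.I) ^ 2 = -2 * Complex.I := by
    rw [sub_sq, Complex.I_sq]; ring
  have h2 : ((Real.sqrt (2 * Real.pi * t) : ℝ) : ℂ) ^ 2 = ((2 * Real.pi * t : ℝ) : ℂ) := by
    rw [← Complex.ofReal_pow, hr2]
  have hπ : (Real.pi : ℂ) ≠ 0 := by exact_mod_cast Real.pi_ne_zero
  have htc : (t : ℂ) ≠ 0 := by exact_mod_cast ht.ne'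
  rw [c0, div_pow, h1, h2]
  push_cast
  field_simp

lemma integral_exp_neg_mul_Ioi_zero {a : ℝ} (ha : 0 < a) :
    ∫ y in Ioi (0 : ℝ), Real.exp (-(a * y)) = a⁻¹ := by
  have h := integral_comp_mul_left_Ioi (fun x => Real.exp (-x)) 0 ha
  simp only [mul_zero, integral_exp_neg_Ioi_zero, smul_eq_mul, mul_one] at h
  exact h

lemma integral_cexp_neg_mul_Ioi_zero {a : ℝ} (ha : 0 < a) :
    ∫ y in Ioi (0 : ℝ), (Real.exp (-(a * y)) : ℂ) = ((a : ℝ) : ℂ)⁻¹ := by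
  norm_cast
  rw [integral_exp_neg_mul_Ioi_zero ha]

set_option maxHeartbeats 1000000 in
lemma repr {t : ℝ} (ht : 0 < t) :
    (∫ s : ℝ, Complex.exp (-Complex.I * (s : ℂ) ^ 2 * (t : ℂ)) / (1 + (s : ℂ) ^ 2))
      = ∫ y in Ioi (0 : ℝ), (Real.exp (-y) : ℂ) * W t y := by
  set F : ℝ → ℝ → ℂ := fun s y =>
    Complex.exp (-Complex.I * (s : ℂ) ^ 2 * (t : ℂ)) * (Real.exp (-((1 + s ^ 2) * y)) : ℂ)
    with hF
  have hpos : ∀ s : ℝ, (0 : ℝ) < 1 + s ^ 2 := fun s => by positivity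
  have habs : ∀ s : ℝ, ‖Complex.exp (-Complex.I * (s : ℂ) ^ 2 * (t : ℂ))‖ = 1 := by
    intro s
    rw [Complex.norm_exp]
    have h : (-Complex.I * (s : ℂ) ^ 2 * (t : ℂ)).re = 0 := by
      have h0 : -Complex.I * (s : ℂ) ^ 2 * (t : ℂ) = ((-(s ^ 2 * t) : ℝ) : ℂ) * Complex.I := by
        push_cast; ring
      rw [h0, Complex.re_ofReal_mul, Complex.I_re, mul_zero]
    rw [h, Real.exp_zero]
  have hnorm : ∀ s y : ℝ, ‖F s y‖ = Real.exp (-((1 + s ^ 2) * y)) := by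
    intro s y
    rw [hF]
    simp only [norm_mul, habs s, one_mul, Complex.norm_real, Real.norm_eq_abs,
      Real.abs_exp]
  have hstep1 : ∀ s : ℝ,
      Complex.exp (-Complex.I * (s : ℂ) ^ 2 * (t : ℂ)) / (1 + (s : ℂ) ^ 2)
        = ∫ y in Ioi (0 : ℝ), F s y := by
    intro s
    rw [hF]
    simp only
    rw [MeasureTheory.integral_const_mul, integral_cexp_neg_mul_Ioi_zero (hpos s)]
    rw [div_eq_mul_inv]
    congr 1
    push_cast
    ring
  have hcont : Continuous (Function.uncurry F) := by
    rw [hF]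
    apply Continuous.mul
    · apply Complex.continuous_exp.comp
      fun_prop
    · apply Complex.continuous_ofReal.comp
      apply Real.continuous_exp.comp
      fun_prop
  have hint : Integrable (Function.uncurry F)
      (volume.prod (volume.restrict (Ioi (0 : ℝ)))) := by
    rw [integrable_prod_iff hcont.aestronglyMeasurable]
    constructor
    · refine Filter.Eventually.of_forall fun s => ?_
      have hre : Integrable (fun y => Real.exp (-((1 + s ^ 2) * y)))
          (volume.restrict (Ioi (0 : ℝ))) := by
        have h := exp_neg_integrableOn_Ioi 0 (hpos s)
        have heq : (fun y : ℝ => Real.exp (-((1 + s ^ 2) * y)))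
            = fun x : ℝ => Real.exp (-(1 + s ^ 2) * x) := by
          funext x; rw [neg_mul]
        rw [heq]
        exact h
      simp only [Function.uncurry_apply_pair]
      exact (hre.ofReal.const_mul _)
    · have heq : (fun s => ∫ y in Ioi (0 : ℝ), ‖F s y‖) = fun s : ℝ => (1 + s ^ 2)⁻¹ := by
        funext s
        simp_rw [hnorm s]
        exact integral_exp_neg_mul_Ioi_zero (hpos s)
      simp only [Function.uncurry_apply_pair]
      rw [heq]
      exact integrable_inv_one_add_sq
  calc (∫ s : ℝ, Complex.exp (-Complex.I * (s : ℂ) ^ 2 * (t : ℂ)) / (1 + (s : ℂ) ^ 2))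
      = ∫ s : ℝ, ∫ y in Ioi (0 : ℝ), F s y :=
        integral_congr_ae (Filter.Eventually.of_forall hstep1)
    _ = ∫ y in Ioi (0 : ℝ), ∫ s : ℝ, F s y := integral_integral_swap hint
    _ = ∫ y in Ioi (0 : ℝ), (Real.exp (-y) : ℂ) * W t y := by
        refine setIntegral_congr_fun measurableSet_Ioi fun y hy => ?_
        have hb : (0 : ℝ) < ((y : ℂ) + Complex.I * t).re := by
          simpa using (hy : (0 : ℝ) < y)
        have hFy : ∀ s : ℝ, F s y
            = (Real.exp (-y) : ℂ)
              * Complex.exp (-((y : ℂ) + Complex.I * t) * (s : ℂ) ^ 2) := by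
          intro s
          rw [hF]
          simp only [Complex.ofReal_exp]
          rw [← Complex.exp_add, ← Complex.exp_add]
          congr 1
          push_cast
          ring
        rw [integral_congr_ae (Filter.Eventually.of_forall hFy),
          MeasureTheory.integral_const_mul, integral_gaussian_complex hb]
        rfl

lemma exp_neg_int : Integrable (fun y : ℝ => Real.exp (-y)) (volume.restrict (Ioi (0 : ℝ))) := by
  have h := exp_neg_integrableOn_Ioi (0 : ℝ) one_pos
  exact (by simpa using h : IntegrableOn (fun x : ℝ => Real.exp (-x)) (Ioi 0) volume)

lemma exp_neg_cint : ∫ y in Ioi (0 : ℝ), (Real.exp (-y) : ℂ) = 1 := by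
  rw [show (∫ y in Ioi (0 : ℝ), (Real.exp (-y) : ℂ))
      = ((∫ y in Ioi (0 : ℝ), Real.exp (-y) : ℝ) : ℂ) from integral_ofReal (𝕜 := ℂ),
    integral_exp_neg_Ioi_zero]
  norm_num

lemma gamma2_int : Integrable (fun y : ℝ => Real.exp (-y) * y)
    (volume.restrict (Ioi (0 : ℝ))) := by
  have h := Real.GammaIntegral_convergent (by norm_num : (0 : ℝ) < 2)
  have h1 : (2 : ℝ) - 1 = 1 := by norm_num
  rw [h1] at h
  simp_rw [Real.rpow_one] at h
  exact h

lemma gamma2_val : ∫ y in Ioi (0 : ℝ), Real.exp (-y) * y = 1 := by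
  have h := Real.Gamma_eq_integral (by norm_num : (0 : ℝ) < 2)
  have h1 : (2 : ℝ) - 1 = 1 := by norm_num
  rw [h1] at h
  simp_rw [Real.rpow_one] at h
  have h2 : Real.Gamma 2 = 1 := by
    rw [show (2 : ℝ) = 1 + 1 by norm_num, Real.Gamma_add_one one_ne_zero,
      Real.Gamma_one, mul_one]
  rw [← h, h2]

lemma W_integrable {t : ℝ} (ht : 0 < t) :
    Integrable (fun y => (Real.exp (-y) : ℂ) * W t y) (volume.restrict (Ioi (0 : ℝ))) := by
  have hmeas : AEStronglyMeasurable (fun y => (Real.exp (-y) : ℂ) * W t y)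
      (volume.restrict (Ioi (0 : ℝ))) := by
    apply ContinuousOn.aestronglyMeasurable _ measurableSet_Ioi
    apply ContinuousOn.mul
    · fun_prop
    · intro y hy
      apply ContinuousAt.continuousWithinAt
      apply ContinuousAt.cpow
      · exact ContinuousAt.div continuousAt_const (by fun_prop) (z_ne_zero ht y)
      · exact continuousAt_const
      · left
        have hns : 0 < Complex.normSq ((y : ℂ) + Complex.I * t) := by
          rw [Complex.normSq_pos]; exact z_ne_zero ht y
        have hre : ((Real.pi : ℂ) / ((y : ℂ) + Complex.I * t)).re
            = Real.pi * y / Complex.normSq ((y : ℂ) + Complex.I * t) := by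
          rw [Complex.div_re]
          simp
        rw [hre]
        have hy' : (0 : ℝ) < y := hy
        positivity
  refine Integrable.mono' (exp_neg_int.mul_const (Real.sqrt (Real.pi / t))) hmeas ?_
  refine Filter.Eventually.of_forall fun y => ?_
  rw [norm_mul, Complex.norm_real, Real.norm_eq_abs, Real.abs_exp]
  exact mul_le_mul_of_nonneg_left (W_norm_le ht y) (Real.exp_pos _).le

lemma repr2 {t : ℝ} (ht : 0 < t) :
    neumannLS t = ∫ y in Ioi (0 : ℝ),
      (Real.exp (-y) : ℂ) * (c0 t - (1 / (Real.pi : ℂ)) * W t y) := by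
  have h1 : Integrable (fun y => (Real.exp (-y) : ℂ) * c0 t)
      (volume.restrict (Ioi (0 : ℝ))) := exp_neg_int.ofReal.mul_const _
  have hrw : ∀ y : ℝ, (Real.exp (-y) : ℂ) * (c0 t - (1 / (Real.pi : ℂ)) * W t y)
      = (Real.exp (-y) : ℂ) * c0 t
        - (1 / (Real.pi : ℂ)) * ((Real.exp (-y) : ℂ) * W t y) := by
    intro y; ring
  simp_rw [hrw]
  rw [integral_sub h1 ((W_integrable ht).const_mul _), MeasureTheory.integral_mul_const,
    exp_neg_cint, one_mul, MeasureTheory.integral_const_mul, neumannLS, repr ht, c0]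

lemma est1 {t : ℝ} (ht : 0 < t) (y : ℝ) :
    ‖c0 t - (1 / (Real.pi : ℂ)) * W t y‖ ≤ 2 / Real.sqrt t := by
  have hst : 0 < Real.sqrt t := Real.sqrt_pos.mpr ht
  have hs2 : (0 : ℝ) < Real.sqrt 2 := by positivity
  have h1 : ‖c0 t‖ ≤ 1 / Real.sqrt t := by
    rw [c0_norm]
    have h2 : Real.sqrt 2 * Real.sqrt t ≤ Real.sqrt (2 * Real.pi * t) := by
      rw [← Real.sqrt_mul (by norm_num)]
      apply Real.sqrt_le_sqrt
      nlinarith [Real.pi_gt_three]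
    calc Real.sqrt 2 * (Real.sqrt (2 * Real.pi * t))⁻¹
        ≤ Real.sqrt 2 * (Real.sqrt 2 * Real.sqrt t)⁻¹ := by
          apply mul_le_mul_of_nonneg_left _ hs2.le
          exact inv_anti₀ (by positivity) h2
      _ = 1 / Real.sqrt t := by
          rw [mul_inv, ← mul_assoc, mul_inv_cancel₀ hs2.ne', one_mul, one_div]
  have h3 : ‖(1 / (Real.pi : ℂ)) * W t y‖ ≤ 1 / Real.sqrt t := by
    rw [norm_mul, norm_div, norm_one, Complex.norm_real, Real.norm_eq_abs,
      _root_.abs_of_pos Real.pi_pos]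
    have h4 : Real.sqrt (Real.pi / t) = Real.sqrt Real.pi / Real.sqrt t :=
      Real.sqrt_div Real.pi_pos.le t
    have h5 : Real.sqrt Real.pi ≤ Real.pi := by
      have h6 : Real.sqrt Real.pi ≤ Real.sqrt (Real.pi ^ 2) :=
        Real.sqrt_le_sqrt (by nlinarith [Real.pi_gt_three])
      rwa [Real.sqrt_sq Real.pi_pos.le] at h6
    calc 1 / Real.pi * ‖W t y‖ ≤ 1 / Real.pi * (Real.sqrt Real.pi / Real.sqrt t) := by
          apply mul_le_mul_of_nonneg_left _ (by positivity)
          rw [← h4]; exact W_norm_le ht y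
      _ ≤ 1 / Real.sqrt t := by
          have h8 : 1 / Real.pi * (Real.sqrt Real.pi / Real.sqrt t)
              = Real.sqrt Real.pi / Real.pi * (1 / Real.sqrt t) := by ring
          have h7 : Real.sqrt Real.pi / Real.pi ≤ 1 := by
            rw [div_le_one Real.pi_pos]; exact h5
          rw [h8]
          calc Real.sqrt Real.pi / Real.pi * (1 / Real.sqrt t)
              ≤ 1 * (1 / Real.sqrt t) := mul_le_mul_of_nonneg_right h7 (by positivity)
            _ = 1 / Real.sqrt t := one_mul _
  calc ‖c0 t - (1 / (Real.pi : ℂ)) * W t y‖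
      ≤ ‖c0 t‖ + ‖(1 / (Real.pi : ℂ)) * W t y‖ := norm_sub_le _ _
    _ ≤ 2 / Real.sqrt t := by rw [show (2 : ℝ) / Real.sqrt t
          = 1 / Real.sqrt t + 1 / Real.sqrt t by ring]; exact add_le_add h1 h3

lemma est2 {t : ℝ} (ht : 0 < t) {y : ℝ} (hy : 0 ≤ y) :
    ‖c0 t - (1 / (Real.pi : ℂ)) * W t y‖
      ≤ y * (Real.sqrt (2 * Real.pi * t) / (Real.pi * t ^ 2)) := by
  have hπ : (0 : ℝ) < Real.pi := Real.pi_pos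
  have hπc : (Real.pi : ℂ) ≠ 0 := by exact_mod_cast hπ.ne'
  have htc : (t : ℂ) ≠ 0 := by exact_mod_cast ht.ne'
  have hz := z_ne_zero ht y
  have hare : 0 ≤ ((1 / (Real.pi : ℂ)) * W t y).re := by
    rw [show (1 / (Real.pi : ℂ)) = ((Real.pi⁻¹ : ℝ) : ℂ) by push_cast; ring,
      Complex.re_ofReal_mul]
    exact mul_nonneg (by positivity) (W_re_nonneg ht y)
  have hbre : 0 < (c0 t).re := by
    rw [c0_re]
    have := sqrt2pit_pos ht
    positivity
  have hkey := key_sub hare hbre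
  rw [norm_sub_rev]
  refine le_trans hkey ?_
  have hsq : ((1 / (Real.pi : ℂ)) * W t y) ^ 2 - c0 t ^ 2
      = Complex.I * (y : ℂ) / ((Real.pi : ℂ) * ((y : ℂ) + Complex.I * t) * t) := by
    rw [mul_pow, W_sq ht, c0_sq ht]
    field_simp
    linear_combination (t : ℂ) * Complex.I_sq
  rw [hsq, c0_re]
  have hnorm : ‖Complex.I * (y : ℂ) / ((Real.pi : ℂ) * ((y : ℂ) + Complex.I * t) * t)‖
      = y / (Real.pi * ‖(y : ℂ) + Complex.I * t‖ * t) := by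
    rw [norm_div, norm_mul, norm_mul, norm_mul]
    simp [Complex.norm_real, _root_.abs_of_nonneg hy,
      _root_.abs_of_pos hπ, _root_.abs_of_pos ht]
  rw [hnorm, div_eq_mul_inv, inv_inv]
  have habs := abs_z_ge ht y
  calc y / (Real.pi * ‖(y : ℂ) + Complex.I * t‖ * t)
        * Real.sqrt (2 * Real.pi * t)
      ≤ y / (Real.pi * t * t) * Real.sqrt (2 * Real.pi * t) := by
        apply mul_le_mul_of_nonneg_right _ (Real.sqrt_nonneg _)
        apply div_le_div_of_nonneg_left hy (by positivity)
        have h0 : (0 : ℝ) ≤ Real.pi * t := by positivity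
        nlinarith [norm_nonneg ((y : ℂ) + Complex.I * t)]
    _ = y * (Real.sqrt (2 * Real.pi * t) / (Real.pi * t ^ 2)) := by
        field_simp

end NeumannLSAux

/-- `g₁(t) = O(t^{-1/2})` as `t → 0⁺` and `g₁(t) = O(t^{-3/2})` as `t → ∞`. -/
theorem neumannLS_asymptotics :
    (∃ C₀ > (0 : ℝ), ∃ δ > (0 : ℝ), ∀ t : ℝ, 0 < t → t < δ →
      ‖neumannLS t‖ ≤ C₀ * t ^ (-(1 : ℝ) / 2)) ∧
    (∃ C₁ > (0 : ℝ), ∃ R > (0 : ℝ), ∀ t : ℝ, R < t →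
      ‖neumannLS t‖ ≤ C₁ * t ^ (-(3 : ℝ) / 2)) := by
  constructor
  · refine ⟨2, by norm_num, 1, by norm_num, fun t ht _ => ?_⟩
    have hst : 0 < Real.sqrt t := Real.sqrt_pos.mpr ht
    rw [NeumannLSAux.repr2 ht]
    have hbound : ∀ᵐ y ∂(volume.restrict (Ioi (0 : ℝ))),
        ‖(Real.exp (-y) : ℂ) * (NeumannLSAux.c0 t
          - (1 / (Real.pi : ℂ)) * NeumannLSAux.W t y)‖
          ≤ Real.exp (-y) * (2 / Real.sqrt t) :=
      Filter.Eventually.of_forall fun y => by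
        rw [norm_mul, Complex.norm_real, Real.norm_eq_abs, Real.abs_exp]
        exact mul_le_mul_of_nonneg_left (NeumannLSAux.est1 ht y) (Real.exp_pos _).le
    refine le_trans (norm_integral_le_of_norm_le
      (NeumannLSAux.exp_neg_int.mul_const _) hbound) ?_
    rw [MeasureTheory.integral_mul_const, integral_exp_neg_Ioi_zero, one_mul,
      show (-(1 : ℝ) / 2) = -(1 / 2) by norm_num, Real.rpow_neg ht.le, ← Real.sqrt_eq_rpow,
      div_eq_mul_inv]
  · refine ⟨1, by norm_num, 1, by norm_num, fun t ht1 => ?_⟩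
    have ht : 0 < t := lt_trans one_pos ht1
    rw [NeumannLSAux.repr2 ht]
    have hbound : ∀ᵐ y ∂(volume.restrict (Ioi (0 : ℝ))),
        ‖(Real.exp (-y) : ℂ) * (NeumannLSAux.c0 t
          - (1 / (Real.pi : ℂ)) * NeumannLSAux.W t y)‖
          ≤ Real.exp (-y) * y * (Real.sqrt (2 * Real.pi * t) / (Real.pi * t ^ 2)) := by
      rw [ae_restrict_iff' measurableSet_Ioi]
      refine Filter.Eventually.of_forall fun y hy => ?_
      rw [norm_mul, Complex.norm_real, Real.norm_eq_abs, Real.abs_exp, mul_assoc]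
      exact mul_le_mul_of_nonneg_left (NeumannLSAux.est2 ht (le_of_lt hy))
        (Real.exp_pos _).le
    refine le_trans (norm_integral_le_of_norm_le
      (NeumannLSAux.gamma2_int.mul_const _) hbound) ?_
    have hval : (∫ y in Ioi (0 : ℝ),
        Real.exp (-y) * y * (Real.sqrt (2 * Real.pi * t) / (Real.pi * t ^ 2)))
        = Real.sqrt (2 * Real.pi * t) / (Real.pi * t ^ 2) := by
      rw [MeasureTheory.integral_mul_const, NeumannLSAux.gamma2_val, one_mul]
    rw [hval, one_mul]
    have hrpow : t ^ (-(3 : ℝ) / 2) = Real.sqrt t / t ^ 2 := by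
      rw [show (-(3 : ℝ) / 2) = 1 / 2 - 2 by norm_num, Real.rpow_sub ht,
        ← Real.sqrt_eq_rpow, show ((2 : ℝ)) = ((2 : ℕ) : ℝ) by norm_num,
        Real.rpow_natCast]
    rw [hrpow, Real.sqrt_mul (by positivity : (0 : ℝ) ≤ 2 * Real.pi) t]
    have h2π : Real.sqrt (2 * Real.pi) ≤ Real.pi := by
      have h := Real.sqrt_le_sqrt
        (by nlinarith [Real.pi_gt_three] : 2 * Real.pi ≤ Real.pi ^ 2)
      rwa [Real.sqrt_sq Real.pi_pos.le] at h
    rw [div_le_div_iff₀ (by positivity) (by positivity)]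
    have h1 := Real.sqrt_nonneg t
    nlinarith [mul_le_mul_of_nonneg_right h2π
      (by positivity : (0 : ℝ) ≤ Real.sqrt t * t ^ 2)]
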